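/- Let (S,d) be a compact metric space, let r ∈ ℕ, let λ_{−r}, …, λ_r ∈ [0,1] be weights with Σ_{k=−r}^{r} λ_k = 1, and let T : M(S) → M(S) be a map on Borel probability measures. Suppose T satisfies the average Lipschitz property: there is a constant c ≥ 0 such that for all configurations x, y ∈ M(S)^ℤ and all i ∈ ℤ, Σ_{k=−r}^{r} λ_k · d_MK(T(x_{i+k}), T(y_{i+k})) ≤ c · d_MK(x_i, y_i). Then the convex combination map δ_C : M(S)^ℤ → M(S)^ℤ defined by (δ_C(x))_i = Σ_{k=−r}^{r} λ_k · T(x_{i+k}) is Lipschitz with respect to d_M with Lipschitz constant c: d_M(δ_C(x), δ_C(y)) ≤ c · d_M(x, y) for all x, y. -/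

import Mathlib

open MeasureTheory Filter

/-- The Monge–Kantorovich distance between two Borel probability measures on a metric
space `S`: the supremum of `∫ f dμ - ∫ f dν` over all `1`-Lipschitz functions `f : S → ℝ`. -/
noncomputable def dMK {S : Type*} [MetricSpace S] [MeasurableSpace S]
    (μ ν : ProbabilityMeasure S) : ℝ :=
  sSup {r : ℝ | ∃ f : S → ℝ, LipschitzWith 1 f ∧
    r = ∫ x, f x ∂(μ : Measure S) - ∫ x, f x ∂(ν : Measure S)}

/-- The distance `d_M(x, y) = Σ_{i ∈ ℤ} d_MK(x_i, y_i) / 2^{|i|}` between two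
configurations of probability measures indexed by `ℤ`. -/
noncomputable def dM {S : Type*} [MetricSpace S] [MeasurableSpace S]
    (x y : ℤ → ProbabilityMeasure S) : ℝ :=
  ∑' i : ℤ, dMK (x i) (y i) / 2 ^ |i|

/-- Convex combination of probability measures with nonnegative weights summing to 1:
the probability measure `A ↦ Σ_k λ_k μ_k(A)`. -/
noncomputable def convexComb {S : Type*} [MeasurableSpace S] {ι : Type*} (t : Finset ι)
    (lam : ι → ℝ) (hlam : ∀ k ∈ t, 0 ≤ lam k) (hsum : ∑ k ∈ t, lam k = 1)
    (μ : ι → ProbabilityMeasure S) : ProbabilityMeasure S :=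
  ⟨∑ k ∈ t, ENNReal.ofReal (lam k) • (μ k : Measure S), by
    constructor
    have h : (∑ k ∈ t, ENNReal.ofReal (lam k) • (μ k : Measure S)) Set.univ
        = ∑ k ∈ t, ENNReal.ofReal (lam k) := by
      rw [Measure.finset_sum_apply]
      simp [Measure.smul_apply, measure_univ]
    rw [h, ← ENNReal.ofReal_sum_of_nonneg hlam, hsum, ENNReal.ofReal_one]⟩

/-- The convex combination local rule `δ_C` with radius `r`, weights `λ_{-r}, …, λ_r`
and map `T` on probability measures: `(δ_C(x))_i = Σ_{k=-r}^{r} λ_k · T(x_{i+k})`. -/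
noncomputable def deltaC {S : Type*} [MeasurableSpace S] (r : ℕ) (lam : ℤ → ℝ)
    (hlam : ∀ k ∈ Finset.Icc (-(r : ℤ)) (r : ℤ), 0 ≤ lam k)
    (hsum : ∑ k ∈ Finset.Icc (-(r : ℤ)) (r : ℤ), lam k = 1)
    (T : ProbabilityMeasure S → ProbabilityMeasure S)
    (x : ℤ → ProbabilityMeasure S) : ℤ → ProbabilityMeasure S :=
  fun i => convexComb (Finset.Icc (-(r : ℤ)) (r : ℤ)) lam hlam hsum
    (fun k => T (x (i + k)))


set_option linter.unusedSectionVars false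

section Aux

variable {S : Type*} [MetricSpace S] [CompactSpace S] [MeasurableSpace S] [BorelSpace S]

lemma integrable_of_lip (f : S → ℝ) (hf : LipschitzWith 1 f) (μ : ProbabilityMeasure S) :
    Integrable f (μ : Measure S) :=
  hf.continuous.integrable_of_hasCompactSupport (HasCompactSupport.of_compactSpace f)

lemma nonempty_of_pm (μ : ProbabilityMeasure S) : Nonempty S := by
  by_contra h
  have : (μ : Measure S) Set.univ = 1 := measure_univ
  rw [Set.univ_eq_empty_iff.2 (not_nonempty_iff.1 h)] at this
  simp at this

lemma mem_dMK_set (μ ν : ProbabilityMeasure S) :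
    (0:ℝ) ∈ {r : ℝ | ∃ f : S → ℝ, LipschitzWith 1 f ∧
      r = ∫ x, f x ∂(μ : Measure S) - ∫ x, f x ∂(ν : Measure S)} :=
  ⟨fun _ => 0, (LipschitzWith.const 0).weaken zero_le_one, by simp⟩

lemma dMK_mem_le (μ ν : ProbabilityMeasure S) :
    ∀ r ∈ {r : ℝ | ∃ f : S → ℝ, LipschitzWith 1 f ∧
      r = ∫ x, f x ∂(μ : Measure S) - ∫ x, f x ∂(ν : Measure S)},
      r ≤ 2 * Metric.diam (Set.univ : Set S) := by
  have : Nonempty S := nonempty_of_pm μ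
  obtain ⟨x0⟩ := this
  rintro r ⟨f, hf, rfl⟩
  set D := Metric.diam (Set.univ : Set S)
  have hb : ∀ x : S, |f x - f x0| ≤ D := by
    intro x
    have h1 : |f x - f x0| ≤ dist x x0 := by
      simpa [Real.dist_eq] using hf.dist_le_mul x x0
    exact h1.trans (Metric.dist_le_diam_of_mem isCompact_univ.isBounded trivial trivial)
  have h1 : ∫ x, f x ∂(μ : Measure S) ≤ f x0 + D := by
    calc ∫ x, f x ∂(μ : Measure S) ≤ ∫ _, f x0 + D ∂(μ : Measure S) := by
          refine integral_mono (integrable_of_lip f hf μ) (integrable_const _) fun x => ?_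
          have := (abs_le.1 (hb x)).2; linarith
      _ = f x0 + D := by simp
  have h2 : f x0 - D ≤ ∫ x, f x ∂(ν : Measure S) := by
    calc f x0 - D = ∫ _, f x0 - D ∂(ν : Measure S) := by simp
      _ ≤ ∫ x, f x ∂(ν : Measure S) := by
          refine integral_mono (integrable_const _) (integrable_of_lip f hf ν) fun x => ?_
          have := (abs_le.1 (hb x)).1; linarith
  linarith

lemma dMK_bddAbove (μ ν : ProbabilityMeasure S) :
    BddAbove {r : ℝ | ∃ f : S → ℝ, LipschitzWith 1 f ∧
      r = ∫ x, f x ∂(μ : Measure S) - ∫ x, f x ∂(ν : Measure S)} :=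
  ⟨2 * Metric.diam (Set.univ : Set S), dMK_mem_le μ ν⟩

lemma dMK_nonneg (μ ν : ProbabilityMeasure S) : 0 ≤ dMK μ ν :=
  le_csSup (dMK_bddAbove μ ν) (mem_dMK_set μ ν)

lemma dMK_le_diam (μ ν : ProbabilityMeasure S) :
    dMK μ ν ≤ 2 * Metric.diam (Set.univ : Set S) :=
  csSup_le ⟨0, mem_dMK_set μ ν⟩ (dMK_mem_le μ ν)

lemma integral_convexComb {ι : Type*} (t : Finset ι) (lam : ι → ℝ)
    (hlam : ∀ k ∈ t, 0 ≤ lam k) (hsum : ∑ k ∈ t, lam k = 1)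
    (μ : ι → ProbabilityMeasure S) (f : S → ℝ) (hf : LipschitzWith 1 f) :
    ∫ x, f x ∂(convexComb t lam hlam hsum μ : Measure S)
      = ∑ k ∈ t, lam k * ∫ x, f x ∂(μ k : Measure S) := by
  have : (convexComb t lam hlam hsum μ : Measure S)
      = ∑ k ∈ t, ENNReal.ofReal (lam k) • (μ k : Measure S) := rfl
  rw [this, integral_finset_sum_measure]
  · refine Finset.sum_congr rfl fun k hk => ?_
    rw [integral_smul_measure, ENNReal.toReal_ofReal (hlam k hk), smul_eq_mul]
  · exact fun k hk => (integrable_of_lip f hf (μ k)).smul_measure ENNReal.ofReal_ne_top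

lemma dMK_convexComb_le {ι : Type*} (t : Finset ι) (lam : ι → ℝ)
    (hlam : ∀ k ∈ t, 0 ≤ lam k) (hsum : ∑ k ∈ t, lam k = 1)
    (μ ν : ι → ProbabilityMeasure S) :
    dMK (convexComb t lam hlam hsum μ) (convexComb t lam hlam hsum ν)
      ≤ ∑ k ∈ t, lam k * dMK (μ k) (ν k) := by
  refine csSup_le ⟨0, mem_dMK_set _ _⟩ ?_
  rintro r ⟨f, hf, rfl⟩
  rw [integral_convexComb t lam hlam hsum μ f hf,
    integral_convexComb t lam hlam hsum ν f hf, ← Finset.sum_sub_distrib]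
  refine Finset.sum_le_sum fun k hk => ?_
  rw [← mul_sub]
  refine mul_le_mul_of_nonneg_left ?_ (hlam k hk)
  exact le_csSup (dMK_bddAbove (μ k) (ν k)) ⟨f, hf, rfl⟩

lemma summable_aux (C : ℝ) : Summable (fun i : ℤ => C / 2 ^ |i|) := by
  apply Summable.of_nat_of_neg
  · have : (fun n : ℕ => C / 2 ^ |(n : ℤ)|) = fun n : ℕ => C * (1/2) ^ n := by
      ext n
      rw [show |(n : ℤ)| = (n : ℤ) from abs_of_nonneg (Int.natCast_nonneg n), zpow_natCast]
      simp [div_eq_mul_inv]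
    rw [this]
    exact (summable_geometric_of_lt_one (by norm_num) (by norm_num)).mul_left C
  · have : (fun n : ℕ => C / 2 ^ |(-(n : ℤ))|) = fun n : ℕ => C * (1/2) ^ n := by
      ext n
      rw [abs_neg, show |(n : ℤ)| = (n : ℤ) from abs_of_nonneg (Int.natCast_nonneg n),
        zpow_natCast]
      simp [div_eq_mul_inv]
    rw [this]
    exact (summable_geometric_of_lt_one (by norm_num) (by norm_num)).mul_left C

end Aux

/-- If `T` satisfies the average Lipschitz property with constant `c`, then the convex
combination map `δ_C` is Lipschitz with respect to `d_M` with Lipschitz constant `c`. -/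
theorem deltaC_lipschitz_of_average_lipschitz {S : Type*} [MetricSpace S] [CompactSpace S]
    [MeasurableSpace S] [BorelSpace S] (r : ℕ) (lam : ℤ → ℝ)
    (hlam : ∀ k ∈ Finset.Icc (-(r : ℤ)) (r : ℤ), 0 ≤ lam k)
    (hlam' : ∀ k ∈ Finset.Icc (-(r : ℤ)) (r : ℤ), lam k ≤ 1)
    (hsum : ∑ k ∈ Finset.Icc (-(r : ℤ)) (r : ℤ), lam k = 1)
    (T : ProbabilityMeasure S → ProbabilityMeasure S) (c : ℝ) (hc : 0 ≤ c)
    (hT : ∀ (x y : ℤ → ProbabilityMeasure S) (i : ℤ),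
      ∑ k ∈ Finset.Icc (-(r : ℤ)) (r : ℤ), lam k * dMK (T (x (i + k))) (T (y (i + k)))
        ≤ c * dMK (x i) (y i)) :
    ∀ x y : ℤ → ProbabilityMeasure S,
      dM (deltaC r lam hlam hsum T x) (deltaC r lam hlam hsum T y) ≤ c * dM x y := by
  intro x y
  have hS : Nonempty S := nonempty_of_pm (x 0)
  set D := 2 * Metric.diam (Set.univ : Set S) with hD
  have hD0 : 0 ≤ D := by positivity
  have hterm : ∀ i : ℤ,
      dMK (deltaC r lam hlam hsum T x i) (deltaC r lam hlam hsum T y i) / 2 ^ |i|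
        ≤ c * (dMK (x i) (y i) / 2 ^ |i|) := by
    intro i
    have h1 : dMK (deltaC r lam hlam hsum T x i) (deltaC r lam hlam hsum T y i)
        ≤ c * dMK (x i) (y i) :=
      (dMK_convexComb_le _ lam hlam hsum _ _).trans (hT x y i)
    rw [mul_div_assoc']
    exact div_le_div_of_nonneg_right h1 (by positivity) |>.trans_eq rfl
  have hsR : Summable (fun i : ℤ => c * (dMK (x i) (y i) / 2 ^ |i|)) := by
    refine Summable.of_nonneg_of_le
      (fun i => mul_nonneg hc (div_nonneg (dMK_nonneg _ _) (by positivity))) (fun i => ?_)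
      (summable_aux (c * D))
    rw [mul_div_assoc']
    refine div_le_div_of_nonneg_right ?_ (by positivity)
    exact mul_le_mul_of_nonneg_left (dMK_le_diam _ _) hc
  have hsL : Summable (fun i : ℤ =>
      dMK (deltaC r lam hlam hsum T x i) (deltaC r lam hlam hsum T y i) / 2 ^ |i|) := by
    exact Summable.of_nonneg_of_le
      (fun i => div_nonneg (dMK_nonneg _ _) (by positivity)) (fun i => hterm i) hsR
  calc dM (deltaC r lam hlam hsum T x) (deltaC r lam hlam hsum T y)
      = ∑' i : ℤ, dMK (deltaC r lam hlam hsum T x i) (deltaC r lam hlam hsum T y i)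
          / 2 ^ |i| := rfl
    _ ≤ ∑' i : ℤ, c * (dMK (x i) (y i) / 2 ^ |i|) := Summable.tsum_le_tsum hterm hsL hsR
    _ = c * dM x y := tsum_mul_left
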